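/- For every natural number n ≥ 1, the number of admissible subsets of {1, …, 2n} equals the central binomial coefficient: the cardinality of the set of subsets I ⊆ {1, …, 2n} such that 2·|I ∩ {1, …, m}| ≤ m for every m ∈ {1, …, 2n} is equal to C(2n, n). -/

import Mathlib

open Finset
open scoped Classical

def admP (k h : ℕ) (I : Finset ℕ) : Prop :=
  (∀ m ∈ Icc 1 k, 2 * (I ∩ Icc 1 m).card ≤ m) ∧ 2 * I.card + h = k

noncomputable def Nk (k h : ℕ) : ℕ :=
  ((Icc 1 k).powerset.filter (admP k h)).card

lemma inter_Icc_eq_self {I : Finset ℕ} {k m : ℕ} (hI : I ⊆ Icc 1 k) (hkm : k ≤ m) :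
    I ∩ Icc 1 m = I := by
  apply Finset.inter_eq_left.mpr
  intro x hx
  have := hI hx
  simp only [mem_Icc] at this ⊢
  omega

lemma card_filter_congr' {α : Type*} {s : Finset α} {p q : α → Prop}
    [DecidablePred p] [DecidablePred q] (h : ∀ x ∈ s, p x ↔ q x) :
    (s.filter p).card = (s.filter q).card := by
  congr 1
  exact Finset.filter_congr h

lemma Nk_succ (k h : ℕ) :
    Nk (k+1) h = (if h = 0 then 0 else Nk k (h-1)) + Nk k (h+1) := by
  have hicc : ((Icc 1 (k+1)).powerset : Finset (Finset ℕ))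
      = (insert (k+1) (Icc 1 k)).powerset := by
    congr 1
    ext x; simp only [mem_Icc, mem_insert]; omega
  have hnm : (k+1) ∉ Icc 1 k := by simp
  have hins : ∀ (J : Finset ℕ) (m : ℕ), m ≤ k →
      (insert (k+1) J) ∩ Icc 1 m = J ∩ Icc 1 m := by
    intro J m hm
    apply Finset.insert_inter_of_notMem
    simp only [mem_Icc]; omega
  have hsub1 : Icc 1 k ⊆ Icc 1 (k+1) := by
    intro x hx; simp only [mem_Icc] at hx ⊢; omega
  rw [Nk, hicc, powerset_insert, filter_union]
  refine Eq.trans (Finset.card_union_of_disjoint ?_) ?_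
  · rw [Finset.disjoint_left]
    intro a ha hb
    rw [mem_filter, mem_powerset] at ha
    rw [mem_filter, mem_image] at hb
    obtain ⟨⟨t, ht, rfl⟩, -⟩ := hb
    exact hnm (ha.1 (mem_insert_self _ _))
  congr 1
  · -- part without k+1
    by_cases hh : h = 0
    · subst hh
      rw [if_pos rfl]
      refine Finset.card_eq_zero.mpr (Finset.filter_eq_empty_iff.mpr ?_)
      intro I hI
      rw [mem_powerset] at hI
      rintro ⟨hadm, heq⟩
      rcases Nat.eq_zero_or_pos k with hk | hk
      · subst hk
        have : I = ∅ := subset_empty.mp (by simpa using hI)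
        subst this; simp at heq
      · have hmem : k ∈ Icc 1 (k+1) := by simp only [mem_Icc]; omega
        have := hadm k hmem
        rw [inter_Icc_eq_self hI le_rfl] at this
        omega
    · rw [if_neg hh, Nk]
      refine card_filter_congr' ?_
      intro I hI
      rw [mem_powerset] at hI
      rw [admP, admP]
      constructor
      · rintro ⟨hadm, heq⟩
        exact ⟨fun m hm => hadm m (hsub1 hm), by omega⟩
      · rintro ⟨hadm, heq⟩
        refine ⟨fun m hm => ?_, by omega⟩
        rw [mem_Icc] at hm
        rcases Nat.lt_or_ge m (k+1) with h1 | h1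
        · exact hadm m (mem_Icc.mpr ⟨hm.1, by omega⟩)
        · have : m = k+1 := by omega
          subst this
          rw [inter_Icc_eq_self hI (by omega)]; omega
  · -- part with k+1 : card equals Nk k (h+1), via bijection insert (k+1)
    rw [Nk]
    symm
    refine Finset.card_bij' (fun I _ => insert (k+1) I) (fun J _ => J.erase (k+1))
      ?_ ?_ ?_ ?_
    · intro I hI
      rw [mem_filter, mem_powerset] at hI
      obtain ⟨hsub, hadm, heq⟩ := hI
      have hnI : (k+1) ∉ I := fun hx => hnm (hsub hx)
      rw [mem_filter]
      refine ⟨mem_image_of_mem _ (mem_powerset.mpr hsub), fun m hm => ?_, ?_⟩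
      · rw [mem_Icc] at hm
        rcases Nat.lt_or_ge m (k+1) with h1 | h1
        · rw [hins I m (by omega)]
          exact hadm m (mem_Icc.mpr ⟨hm.1, by omega⟩)
        · have : m = k+1 := by omega
          subst this
          have hsub' : insert (k+1) I ⊆ Icc 1 (k+1) := by
            refine insert_subset (by simp only [mem_Icc]; omega) (hsub.trans hsub1)
          rw [inter_Icc_eq_self hsub' le_rfl, card_insert_of_notMem hnI]
          omega
      · rw [card_insert_of_notMem hnI]; omega
    · intro J hJ
      rw [mem_filter, mem_image] at hJ
      obtain ⟨⟨t, ht, rfl⟩, hadm, heq⟩ := hJ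
      rw [mem_powerset] at ht
      have hnt : (k+1) ∉ t := fun hx => hnm (ht hx)
      rw [erase_insert hnt, mem_filter, mem_powerset]
      rw [card_insert_of_notMem hnt] at heq
      refine ⟨ht, fun m hm => ?_, by omega⟩
      have := hadm m (hsub1 hm)
      rwa [hins t m (mem_Icc.mp hm).2] at this
    · intro I hI
      rw [mem_filter, mem_powerset] at hI
      have hnI : (k+1) ∉ I := fun hx => hnm (hI.1 hx)
      exact erase_insert hnI
    · intro J hJ
      rw [mem_filter, mem_image] at hJ
      obtain ⟨⟨t, ht, rfl⟩, -⟩ := hJ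
      rw [mem_powerset] at ht
      have hnt : (k+1) ∉ t := fun hx => hnm (ht hx)
      rw [erase_insert hnt]

lemma Nk_base (h : ℕ) : Nk 0 h = if h = 0 then 1 else 0 := by
  unfold Nk
  rw [show (Icc 1 0 : Finset ℕ) = ∅ by simp, powerset_empty]
  by_cases hh : h = 0
  · subst hh
    rw [if_pos rfl, filter_singleton, if_pos]
    · simp
    · exact ⟨by simp, by simp⟩
  · rw [if_neg hh, filter_singleton, if_neg, card_empty]
    rintro ⟨-, heq⟩
    simp at heq
    omega

lemma Nk_vanish (k h : ℕ) (hk : k < h) : Nk k h = 0 := by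
  unfold Nk
  refine Finset.card_eq_zero.mpr (Finset.filter_eq_empty_iff.mpr ?_)
  intro I _
  rintro ⟨-, heq⟩
  omega

noncomputable def cc (k : ℕ) (j : ℤ) : ℤ :=
  if 0 ≤ j then (Nat.choose k j.toNat : ℤ) else 0

lemma cc_succ (k : ℕ) (j : ℤ) : cc (k+1) j = cc k j + cc k (j-1) := by
  unfold cc
  rcases lt_trichotomy j 0 with hj | hj | hj
  · rw [if_neg (by omega), if_neg (by omega), if_neg (by omega)]; ring
  · subst hj; norm_num
  · rw [if_pos (by omega), if_pos (by omega), if_pos (by omega)]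
    have ht : j.toNat = (j-1).toNat + 1 := by omega
    rw [ht, Nat.choose_succ_succ]
    push_cast; ring

lemma Nk_closed : ∀ k s : ℕ, 2 * s ≤ k →
    (Nk k (k - 2 * s) : ℤ) = cc k (s : ℤ) - cc k ((s : ℤ) - 1) := by
  intro k
  induction k with
  | zero =>
    intro s hs
    have : s = 0 := by omega
    subst this
    rw [Nk_base]
    norm_num [cc]
  | succ k ih =>
    intro s hs
    rw [Nk_succ]
    rcases Nat.lt_or_ge (2 * s) (k + 1) with hlt | hge
    · -- 2*s ≤ k, so h = k+1-2s ≥ 1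
      have h1 : (k + 1) - 2 * s ≠ 0 := by omega
      rw [if_neg h1]
      have e1 : (k + 1) - 2 * s - 1 = k - 2 * s := by omega
      rw [e1]
      rcases Nat.eq_zero_or_pos s with hs0 | hs1
      · subst hs0
        have e2 : (k + 1) - 2 * 0 + 1 = k + 2 := by omega
        rw [e2, Nk_vanish k (k+2) (by omega)]
        have := ih 0 (by omega)
        push_cast at this ⊢
        rw [this]
        simp [cc]
      · have e2 : (k + 1) - 2 * s + 1 = k - 2 * (s - 1) := by omega
        rw [e2]
        have ihs := ih s (by omega)
        have ihs' := ih (s-1) (by omega)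
        push_cast [Nat.cast_sub hs1] at ihs'
        rw [cc_succ, cc_succ]
        push_cast
        rw [ihs, ihs']
        ring
    · -- 2*s = k+1, h = 0
      have hk : 2 * s = k + 1 := by omega
      have hs1 : 1 ≤ s := by omega
      have h0 : (k + 1) - 2 * s = 0 := by omega
      rw [h0, if_pos rfl]
      have e2 : 0 + 1 = k - 2 * (s - 1) := by omega
      rw [e2]
      have ihs' := ih (s-1) (by omega)
      push_cast [Nat.cast_sub hs1] at ihs'
      rw [cc_succ, cc_succ]
      push_cast
      rw [ihs']
      have hsym : cc k ((s : ℤ)) = cc k ((s : ℤ) - 1) := by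
        unfold cc
        rw [if_pos (by omega), if_pos (by omega)]
        have h1 : ((s : ℤ)).toNat = s := by omega
        have h2 : ((s : ℤ) - 1).toNat = s - 1 := by omega
        rw [h1, h2]
        have : k - s = s - 1 := by omega
        rw [← this, Nat.choose_symm (by omega)]
      rw [hsym]
      ring

lemma sum_Nk (n : ℕ) :
    (∑ s ∈ range (n+1), (Nk (2*n) (2*n - 2*s) : ℤ)) = (Nat.choose (2*n) n : ℤ) := by
  have hterm : ∀ s ∈ range (n+1),
      (Nk (2*n) (2*n - 2*s) : ℤ)
        = cc (2*n) (((s+1 : ℕ) : ℤ) - 1) - cc (2*n) (((s : ℕ) : ℤ) - 1) := by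
    intro s hs
    rw [mem_range] at hs
    rw [Nk_closed (2*n) s (by omega)]
    push_cast
    ring_nf
  rw [Finset.sum_congr rfl hterm,
    Finset.sum_range_sub (f := fun t : ℕ => cc (2*n) ((t : ℤ) - 1))]
  have e1 : (((n+1:ℕ) : ℤ) - 1) = (n : ℤ) := by push_cast; ring
  have e2 : (((0:ℕ) : ℤ) - 1) = (-1 : ℤ) := by norm_num
  rw [e1, e2]
  unfold cc
  rw [if_pos (by positivity), if_neg (by norm_num)]
  simp



lemma mem_filter'' {α : Type*} {s : Finset α} {p : α → Prop} {h : DecidablePred p} {a : α} :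
    a ∈ @Finset.filter α p h s ↔ a ∈ s ∧ p a := Finset.mem_filter

open scoped Classical in
theorem card_admissible_subsets (n : ℕ) (hn : 1 ≤ n) :
    ((Finset.Icc 1 (2 * n)).powerset.filter
        (fun I => ∀ m ∈ Finset.Icc 1 (2 * n),
          2 * (I ∩ Finset.Icc 1 m).card ≤ m)).card
      = Nat.choose (2 * n) n := by
  have hNksum : (∑ s ∈ range (n+1), Nk (2*n) (2*n - 2*s)) = Nat.choose (2*n) n := by
    have h := sum_Nk n
    exact_mod_cast h
  refine Eq.trans (Finset.card_eq_sum_card_fiberwise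
    (f := fun I : Finset ℕ => I.card) (t := range (n+1)) ?_) ?_
  · intro I hI
    obtain ⟨hsub, hadm⟩ := mem_filter''.mp hI
    rw [Finset.mem_powerset] at hsub
    rw [mem_coe, mem_range]
    have h2 := hadm (2*n) (by rw [mem_Icc]; omega)
    rw [inter_Icc_eq_self hsub le_rfl] at h2
    dsimp only
    omega
  · refine Eq.trans (Finset.sum_congr rfl fun s hs => ?_) hNksum
    rw [mem_range] at hs
    rw [Nk]
    refine Finset.card_bij' (fun I _ => I) (fun I _ => I) ?_ ?_
      (fun _ _ => rfl) (fun _ _ => rfl)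
    · intro I hI
      beta_reduce
      obtain ⟨hIf, hcard⟩ := mem_filter''.mp hI
      obtain ⟨hpow, hadm⟩ := mem_filter''.mp hIf
      have hcard' : I.card = s := hcard
      exact mem_filter''.mpr ⟨hpow, hadm, by omega⟩
    · intro J hJ
      beta_reduce
      obtain ⟨hpow, hadm, heq⟩ := mem_filter''.mp hJ
      exact mem_filter''.mpr ⟨mem_filter''.mpr ⟨hpow, hadm⟩, show J.card = s by omega⟩
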